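/- Let (V, μ) be a connected weighted graph with Green function g, and suppose h is a nonnegative, nonharmonic function on V satisfying −Δh ≥ 0 and Δ(|Δh|^{p−2}Δh) ≥ 0 for some 1 < p < ∞. Then, with h₁ = −Δh, the function h₁ is strictly positive, and for any x₀ ∈ V, h(x₀) ≥ ∑_{y∈V} g(x₀,y) h₁(y) μ(y); moreover g_q(x₀,x₀) < ∞ where q = p/(p−1). -/

import Mathlib

open scoped ENNReal

/-- Vertex weight `μ(x) = ∑_y μ_{xy}` of a weighted graph. -/
noncomputable def vertexWeight {V : Type*} (μ : V → V → ℝ≥0∞) (x : V) : ℝ≥0∞ := ∑' y, μ x y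

/-- Transition kernel `P(x,y) = μ_{xy}/μ(x)` of the random walk. -/
noncomputable def transKer {V : Type*} (μ : V → V → ℝ≥0∞) (x y : V) : ℝ≥0∞ :=
  μ x y / vertexWeight μ x

open Classical in
/-- Transition kernel of the walk killed on exiting `U`. -/
noncomputable def killedKer {V : Type*} (μ : V → V → ℝ≥0∞) (U : Set V) (x y : V) : ℝ≥0∞ :=
  if x ∈ U ∧ y ∈ U then transKer μ x y else 0

open Classical in
/-- `n`-step iterates `P^U_n` of the killed kernel, with `P^U_0 = I_U`. -/
noncomputable def killedKerN {V : Type*} (μ : V → V → ℝ≥0∞) (U : Set V) : ℕ → V → V → ℝ≥0∞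
  | 0 => fun x y => if x = y ∧ x ∈ U then 1 else 0
  | n + 1 => fun x y => ∑' z, killedKer μ U x z * killedKerN μ U n z y

/-- Killed Green function `g^U(x,y) = ∑_n P^U_n(x,y)/μ(y)`. -/
noncomputable def greenKilled {V : Type*} (μ : V → V → ℝ≥0∞) (U : Set V) (x y : V) : ℝ≥0∞ :=
  ∑' n, killedKerN μ U n x y / vertexWeight μ y

/-- Green function `g(x,y) = ∑_n pₙ(x,y)` of the graph. -/
noncomputable def green {V : Type*} (μ : V → V → ℝ≥0∞) (x y : V) : ℝ≥0∞ :=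
  greenKilled μ Set.univ x y

/-- Killed Green operator `G^U f(x) = ∑_{y∈U} g^U(x,y) f(y) μ(y)`. -/
noncomputable def greenOp {V : Type*} (μ : V → V → ℝ≥0∞) (U : Set V) (f : V → ℝ≥0∞) (x : V) :
    ℝ≥0∞ :=
  ∑' y, greenKilled μ U x y * f y * vertexWeight μ y

/-- The `L^q`-Green function `g_q(x,y) = ∑_z g(x,z) g(z,y)^{q-1} μ(z)`. -/
noncomputable def greenQ {V : Type*} (μ : V → V → ℝ≥0∞) (q : ℝ) (x y : V) : ℝ≥0∞ :=
  ∑' z, green μ x z * green μ z y ^ (q - 1) * vertexWeight μ z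

/-- The `μ`-weighted `L^q(U)` norm. -/
noncomputable def lqNorm {V : Type*} (μ : V → V → ℝ≥0∞) (U : Set V) (q : ℝ) (h : V → ℝ≥0∞) :
    ℝ≥0∞ :=
  (∑' x, U.indicator (fun x => h x ^ q * vertexWeight μ x) x) ^ (1 / q)

/-- The `L^p`-capacity `C_p(K,U)`:
`sup { ν(K)^p : ν = fμ, f ∈ ℓ⁺(K), ‖G^U f‖_{L^q(U)} ≤ 1 }`, `1/p + 1/q = 1`. -/
noncomputable def lpCap {V : Type*} (μ : V → V → ℝ≥0∞) (p q : ℝ) (K : Finset V) (U : Set V) :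
    ℝ≥0∞ :=
  ⨆ f ∈ {f : V → ℝ≥0∞ | (∀ x, x ∉ K → f x = 0) ∧ lqNorm μ U q (greenOp μ U f) ≤ 1},
    (∑ x ∈ K, f x * vertexWeight μ x) ^ p

/-- A weighted graph is locally finite if every vertex has finitely many neighbours. -/
def LocallyFinite' {V : Type*} (μ : V → V → ℝ≥0∞) : Prop :=
  ∀ x, (Function.support (μ x)).Finite

/-- The graph Laplacian `Δf(x) = ∑_y P(x,y)(f(y) − f(x))` acting on real functions. -/
noncomputable def graphLap {V : Type*} (μ : V → V → ℝ≥0∞) (f : V → ℝ) (x : V) : ℝ :=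
  ∑' y, (transKer μ x y).toReal * (f y - f x)

section Aux
variable {V : Type*} {μ : V → V → ℝ≥0∞}

lemma transKer_le_one (hpos : ∀ x, 0 < vertexWeight μ x) (hfin : ∀ x, vertexWeight μ x < ⊤)
    (x y : V) : transKer μ x y ≤ 1 := by
  rw [transKer, ENNReal.div_le_iff (hpos x).ne' (hfin x).ne, one_mul]
  exact ENNReal.le_tsum y

lemma transKer_ne_top (hpos : ∀ x, 0 < vertexWeight μ x) (hfin : ∀ x, vertexWeight μ x < ⊤)
    (x y : V) : transKer μ x y ≠ ⊤ :=
  (lt_of_le_of_lt (transKer_le_one hpos hfin x y) (by simp)).ne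

lemma transKer_zero {x y : V} (hxy : μ x y = 0) : transKer μ x y = 0 := by
  simp [transKer, hxy]

lemma tsum_transKer (hpos : ∀ x, 0 < vertexWeight μ x) (hfin : ∀ x, vertexWeight μ x < ⊤)
    (x : V) : ∑' y, transKer μ x y = 1 := by
  simp only [transKer, div_eq_mul_inv]
  rw [ENNReal.tsum_mul_right]
  exact ENNReal.mul_inv_cancel (hpos x).ne' (hfin x).ne

lemma killedKer_univ (x y : V) : killedKer μ Set.univ x y = transKer μ x y := by
  simp [killedKer]

open Classical in
lemma Pn_zero (x y : V) : killedKerN μ Set.univ 0 x y = if x = y then 1 else 0 := by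
  simp [killedKerN]

lemma Pn_succ (n : ℕ) (x y : V) :
    killedKerN μ Set.univ (n+1) x y = ∑' z, transKer μ x z * killedKerN μ Set.univ n z y := by
  simp [killedKerN, killedKer_univ]

lemma Pn_succ_right (n : ℕ) (x y : V) :
    killedKerN μ Set.univ (n+1) x y = ∑' z, killedKerN μ Set.univ n x z * transKer μ z y := by
  induction n generalizing x y with
  | zero =>
    rw [Pn_succ]
    rw [tsum_eq_single y (by
      intro z hz
      rw [Pn_zero, if_neg (fun h : z = y => hz h), mul_zero])]
    rw [tsum_eq_single x (by
      intro z hz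
      rw [Pn_zero, if_neg (fun h : x = z => hz h.symm), zero_mul])]
    rw [Pn_zero, Pn_zero, if_pos rfl, if_pos rfl, mul_one, one_mul]
  | succ n ih =>
    rw [Pn_succ]
    calc ∑' z, transKer μ x z * killedKerN μ Set.univ (n+1) z y
        = ∑' z, ∑' w, transKer μ x z * (killedKerN μ Set.univ n z w * transKer μ w y) := by
          refine tsum_congr fun z => ?_
          rw [ih, ENNReal.tsum_mul_left]
      _ = ∑' w, (∑' z, transKer μ x z * killedKerN μ Set.univ n z w) * transKer μ w y := by
          rw [ENNReal.tsum_comm]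
          refine tsum_congr fun w => ?_
          rw [← ENNReal.tsum_mul_right]
          exact tsum_congr fun z => by ring
      _ = _ := tsum_congr fun w => by rw [← Pn_succ]

end Aux

section Lap
variable {V : Type*} {μ : V → V → ℝ≥0∞} (hloc : LocallyFinite' μ)
  (hpos : ∀ x, 0 < vertexWeight μ x) (hfin : ∀ x, vertexWeight μ x < ⊤)

include hloc hpos hfin

omit hpos hfin in
lemma transKer_zero_of_not_mem {x z : V} (hz : z ∉ (hloc x).toFinset) : transKer μ x z = 0 :=
  transKer_zero (by simpa [Function.mem_support] using fun h => hz ((hloc x).mem_toFinset.2 h))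

omit hpos hfin in

lemma tsum_eq_sum_transKer (g : V → ℝ≥0∞) (x : V) :
    ∑' z, transKer μ x z * g z = ∑ z ∈ (hloc x).toFinset, transKer μ x z * g z := by
  refine tsum_eq_sum fun z hz => ?_
  rw [transKer_zero_of_not_mem hloc hz, zero_mul]

lemma sum_transKer_toReal (x : V) :
    ∑ z ∈ (hloc x).toFinset, (transKer μ x z).toReal = 1 := by
  have h1 : ∑' z, transKer μ x z = ∑ z ∈ (hloc x).toFinset, transKer μ x z := by
    refine tsum_eq_sum fun z hz => transKer_zero_of_not_mem hloc hz
  have := tsum_transKer hpos hfin x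
  rw [h1] at this
  have h2 := congrArg ENNReal.toReal this
  rw [ENNReal.toReal_sum (fun a _ => transKer_ne_top hpos hfin x a)] at h2
  simpa using h2

lemma graphLap_eq (f : V → ℝ) (x : V) :
    graphLap μ f x = (∑ z ∈ (hloc x).toFinset, (transKer μ x z).toReal * f z) - f x := by
  rw [graphLap]
  rw [tsum_eq_sum (s := (hloc x).toFinset) (fun z hz => by
    rw [transKer_zero_of_not_mem hloc hz]; simp)]
  have : ∀ z ∈ (hloc x).toFinset, (transKer μ x z).toReal * (f z - f x)
      = (transKer μ x z).toReal * f z - (transKer μ x z).toReal * f x :=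
    fun z _ => by ring
  rw [Finset.sum_congr rfl this, Finset.sum_sub_distrib, ← Finset.sum_mul,
    sum_transKer_toReal hloc hpos hfin, one_mul]

lemma ofReal_conv (f : V → ℝ) (hf : ∀ z, 0 ≤ f z) (x : V) :
    ∑' z, transKer μ x z * ENNReal.ofReal (f z)
      = ENNReal.ofReal (∑ z ∈ (hloc x).toFinset, (transKer μ x z).toReal * f z) := by
  rw [tsum_eq_sum_transKer hloc, ENNReal.ofReal_sum_of_nonneg
    (fun z _ => mul_nonneg ENNReal.toReal_nonneg (hf z))]
  refine Finset.sum_congr rfl fun z _ => ?_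
  rw [ENNReal.ofReal_mul ENNReal.toReal_nonneg,
    ENNReal.ofReal_toReal (transKer_ne_top hpos hfin x z)]

lemma super_ofReal (f : V → ℝ) (hf : ∀ z, 0 ≤ f z) (x : V) (hsup : graphLap μ f x ≤ 0) :
    ∑' z, transKer μ x z * ENNReal.ofReal (f z) ≤ ENNReal.ofReal (f x) := by
  rw [ofReal_conv hloc hpos hfin f hf]
  apply ENNReal.ofReal_le_ofReal
  have := graphLap_eq hloc hpos hfin f x
  linarith

lemma ofReal_decomp (f : V → ℝ) (hf : ∀ z, 0 ≤ f z) (x : V) (hsup : graphLap μ f x ≤ 0) :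
    ENNReal.ofReal (f x) = ENNReal.ofReal (-graphLap μ f x)
      + ∑' z, transKer μ x z * ENNReal.ofReal (f z) := by
  rw [ofReal_conv hloc hpos hfin f hf]
  have heq := graphLap_eq hloc hpos hfin f x
  have hnn : 0 ≤ ∑ z ∈ (hloc x).toFinset, (transKer μ x z).toReal * f z :=
    Finset.sum_nonneg fun z _ => mul_nonneg ENNReal.toReal_nonneg (hf z)
  rw [← ENNReal.ofReal_add (by linarith) hnn]
  congr 1
  linarith

end Lap

section Pos
variable {V : Type*} {μ : V → V → ℝ≥0∞}

lemma pos_of_superharmonic (hconn : ∀ x y : V, ∃ n, 0 < killedKerN μ Set.univ n x y)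
    (Ue : V → ℝ≥0∞) (hSH : ∀ x, ∑' z, transKer μ x z * Ue z ≤ Ue x)
    (x₁ : V) (h1 : Ue x₁ ≠ 0) : ∀ x, Ue x ≠ 0 := by
  have aux : ∀ n x, Ue x = 0 → 0 < killedKerN μ Set.univ n x x₁ → Ue x₁ = 0 := by
    intro n
    induction n with
    | zero =>
      intro x h0 hpn
      rw [Pn_zero] at hpn
      by_cases hx : x = x₁
      · exact hx ▸ h0
      · simp [hx] at hpn
    | succ n ih =>
      intro x h0 hpn
      rw [Pn_succ] at hpn
      obtain ⟨z, hz⟩ : ∃ z, transKer μ x z * killedKerN μ Set.univ n z x₁ ≠ 0 := by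
        by_contra hc
        push_neg at hc
        rw [pos_iff_ne_zero, Ne, ENNReal.tsum_eq_zero] at hpn
        exact hpn hc
      have hT : transKer μ x z ≠ 0 := fun hT0 => hz (by rw [hT0, zero_mul])
      have hPn : 0 < killedKerN μ Set.univ n z x₁ :=
        pos_iff_ne_zero.2 fun hP0 => hz (by rw [hP0, mul_zero])
      have hz0 : Ue z = 0 := by
        have := hSH x
        rw [h0, le_zero_iff, ENNReal.tsum_eq_zero] at this
        have := this z
        rcases mul_eq_zero.1 this with hc | hc
        · exact absurd hc hT
        · exact hc
      exact ih z hz0 hPn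
  intro x hx0
  obtain ⟨n, hn⟩ := hconn x x₁
  exact h1 (aux n x hx0 hn)

end Pos

section Green
variable {V : Type*} {μ : V → V → ℝ≥0∞}

lemma Brec (H H₁ : V → ℝ≥0∞)
    (hdec : ∀ y, H y = H₁ y + ∑' z, transKer μ y z * H z) (l : ℕ) (x : V) :
    ∑' y, killedKerN μ Set.univ l x y * H y
      = (∑' y, killedKerN μ Set.univ l x y * H₁ y)
        + ∑' y, killedKerN μ Set.univ (l+1) x y * H y := by
  calc ∑' y, killedKerN μ Set.univ l x y * H y
      = ∑' y, (killedKerN μ Set.univ l x y * H₁ y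
          + killedKerN μ Set.univ l x y * ∑' z, transKer μ y z * H z) := by
        refine tsum_congr fun y => ?_
        rw [← mul_add, ← hdec y]
    _ = (∑' y, killedKerN μ Set.univ l x y * H₁ y)
        + ∑' y, killedKerN μ Set.univ l x y * ∑' z, transKer μ y z * H z :=
        ENNReal.tsum_add
    _ = (∑' y, killedKerN μ Set.univ l x y * H₁ y)
        + ∑' z, killedKerN μ Set.univ (l+1) x z * H z := by
        congr 1
        calc ∑' y, killedKerN μ Set.univ l x y * ∑' z, transKer μ y z * H z
            = ∑' y, ∑' z, killedKerN μ Set.univ l x y * (transKer μ y z * H z) := by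
              exact tsum_congr fun y => ENNReal.tsum_mul_left.symm
          _ = ∑' z, (∑' y, killedKerN μ Set.univ l x y * transKer μ y z) * H z := by
              rw [ENNReal.tsum_comm]
              refine tsum_congr fun z => ?_
              rw [← ENNReal.tsum_mul_right]
              exact tsum_congr fun y => (mul_assoc _ _ _).symm
          _ = ∑' z, killedKerN μ Set.univ (l+1) x z * H z :=
              tsum_congr fun z => by rw [← Pn_succ_right]

lemma partial_sum_eq (H H₁ : V → ℝ≥0∞)
    (hdec : ∀ y, H y = H₁ y + ∑' z, transKer μ y z * H z) (l : ℕ) (x : V) :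
    (∑ n ∈ Finset.range l, ∑' y, killedKerN μ Set.univ n x y * H₁ y)
      + ∑' y, killedKerN μ Set.univ l x y * H y = H x := by
  induction l with
  | zero =>
    rw [Finset.sum_range_zero, zero_add]
    rw [tsum_eq_single x (fun y hy => by rw [Pn_zero, if_neg (fun h : x = y => hy h.symm), zero_mul])]
    rw [Pn_zero, if_pos rfl, one_mul]
  | succ l ih =>
    rw [Finset.sum_range_succ, add_assoc, ← Brec H H₁ hdec l x, ih]

lemma tsum_le_of_partial {c : ℕ → ℝ≥0∞} {B : ℝ≥0∞}
    (hl : ∀ l, ∑ n ∈ Finset.range l, c n ≤ B) : ∑' n, c n ≤ B := by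
  rw [ENNReal.tsum_eq_iSup_sum]
  refine iSup_le fun s => ?_
  obtain ⟨n, hn⟩ := s.exists_nat_subset_range
  exact le_trans (Finset.sum_le_sum_of_subset hn) (hl n)

lemma green_bound (hpos : ∀ x, 0 < vertexWeight μ x) (hfin : ∀ x, vertexWeight μ x < ⊤)
    (H H₁ : V → ℝ≥0∞)
    (hdec : ∀ y, H y = H₁ y + ∑' z, transKer μ y z * H z) (x : V) :
    ∑' y, green μ x y * H₁ y * vertexWeight μ y ≤ H x := by
  have key : ∀ y, green μ x y * H₁ y * vertexWeight μ y
      = ∑' n, killedKerN μ Set.univ n x y * H₁ y := by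
    intro y
    rw [green, greenKilled, mul_assoc, ← ENNReal.tsum_mul_right]
    refine tsum_congr fun n => ?_
    rw [div_eq_mul_inv]
    calc killedKerN μ Set.univ n x y * (vertexWeight μ y)⁻¹ * (H₁ y * vertexWeight μ y)
        = killedKerN μ Set.univ n x y * H₁ y * ((vertexWeight μ y)⁻¹ * vertexWeight μ y) := by
          ring
      _ = killedKerN μ Set.univ n x y * H₁ y := by
          rw [ENNReal.inv_mul_cancel (hpos y).ne' (hfin y).ne, mul_one]
  calc ∑' y, green μ x y * H₁ y * vertexWeight μ y
      = ∑' n, ∑' y, killedKerN μ Set.univ n x y * H₁ y := by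
        rw [← ENNReal.tsum_comm]
        exact tsum_congr key
    _ ≤ H x := by
        refine tsum_le_of_partial fun l => ?_
        calc ∑ n ∈ Finset.range l, ∑' y, killedKerN μ Set.univ n x y * H₁ y
            ≤ _ + ∑' y, killedKerN μ Set.univ l x y * H y := le_self_add
          _ = H x := partial_sum_eq H H₁ hdec l x

end Green

section Cauchy
open Finset in
lemma ennreal_cauchy (a b : ℕ → ℝ≥0∞) :
    ∑' n, ∑ k ∈ Finset.range (n+1), a k * b (n-k) = (∑' k, a k) * (∑' m, b m) := by
  calc ∑' n, ∑ k ∈ Finset.range (n+1), a k * b (n-k)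
      = ∑' n, ∑ kl ∈ antidiagonal n, a kl.1 * b kl.2 := by
        simp_rw [← Nat.sum_antidiagonal_eq_sum_range_succ fun k l => a k * b l]
    _ = ∑' x : Σ n : ℕ, antidiagonal n, a (x.2 : ℕ × ℕ).1 * b (x.2 : ℕ × ℕ).2 := by
        rw [ENNReal.tsum_sigma'
          (fun x : Σ n : ℕ, antidiagonal n => a (x.2 : ℕ × ℕ).1 * b (x.2 : ℕ × ℕ).2)]
        refine tsum_congr fun n => ?_
        rw [← Finset.sum_finset_coe, ← tsum_fintype (L := .unconditional _)]
        rfl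
    _ = ∑' kl : ℕ × ℕ, a kl.1 * b kl.2 :=
        Finset.HasAntidiagonal.sigmaAntidiagonalEquivProd.tsum_eq (fun kl : ℕ × ℕ => a kl.1 * b kl.2)
    _ = (∑' k, a k) * (∑' m, b m) := by
        rw [ENNReal.tsum_prod']
        calc ∑' k, ∑' m, a k * b m = ∑' k, a k * ∑' m, b m :=
              tsum_congr fun k => ENNReal.tsum_mul_left
          _ = _ := ENNReal.tsum_mul_right
end Cauchy

open Classical in
/-- First-visit kernel: `Fk x₀ k x` is the probability that the walk started at `x`
first visits `x₀` at time `k`. -/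
noncomputable def firstVisit {V : Type*} (μ : V → V → ℝ≥0∞) (x₀ : V) : ℕ → V → ℝ≥0∞
  | 0 => fun x => if x = x₀ then 1 else 0
  | k + 1 => fun x => if x = x₀ then 0 else ∑' z, transKer μ x z * firstVisit μ x₀ k z

section FV
variable {V : Type*} {μ : V → V → ℝ≥0∞}

open Classical in
lemma firstVisit_self_zero (x₀ : V) : firstVisit μ x₀ 0 x₀ = 1 := by simp [firstVisit]

open Classical in
lemma firstVisit_self_succ (x₀ : V) (k : ℕ) : firstVisit μ x₀ (k+1) x₀ = 0 := by
  simp [firstVisit]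

open Classical in
lemma firstVisit_zero_ne (x₀ x : V) (hx : x ≠ x₀) : firstVisit μ x₀ 0 x = 0 := by
  simp [firstVisit, hx]

open Classical in
lemma firstVisit_succ_ne (x₀ x : V) (hx : x ≠ x₀) (k : ℕ) :
    firstVisit μ x₀ (k+1) x = ∑' z, transKer μ x z * firstVisit μ x₀ k z := by
  simp [firstVisit, hx]

lemma firstVisit_decomp (x₀ : V) : ∀ n x, killedKerN μ Set.univ n x x₀
    = ∑ k ∈ Finset.range (n+1), firstVisit μ x₀ k x * killedKerN μ Set.univ (n-k) x₀ x₀ := by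
  intro n
  induction n with
  | zero =>
    intro x
    rw [Finset.sum_range_one, Pn_zero, Pn_zero, if_pos rfl, mul_one]
    by_cases hx : x = x₀
    · rw [if_pos hx, hx, firstVisit_self_zero]
    · rw [if_neg hx, firstVisit_zero_ne x₀ x hx]
  | succ n ih =>
    intro x
    by_cases hx : x = x₀
    · subst hx
      rw [Finset.sum_eq_single 0 (fun k _ hk => by
        obtain ⟨j, rfl⟩ := Nat.exists_eq_succ_of_ne_zero hk
        rw [firstVisit_self_succ, zero_mul]) (by simp)]
      rw [firstVisit_self_zero, one_mul, Nat.sub_zero]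
    · rw [Pn_succ]
      calc ∑' z, transKer μ x z * killedKerN μ Set.univ n z x₀
          = ∑' z, ∑ k ∈ Finset.range (n+1),
              transKer μ x z * (firstVisit μ x₀ k z * killedKerN μ Set.univ (n-k) x₀ x₀) := by
            refine tsum_congr fun z => ?_
            rw [ih z, Finset.mul_sum]
        _ = ∑ k ∈ Finset.range (n+1), ∑' z,
              transKer μ x z * (firstVisit μ x₀ k z * killedKerN μ Set.univ (n-k) x₀ x₀) := by
            rw [Summable.tsum_finsetSum fun _ _ => ENNReal.summable]
        _ = ∑ k ∈ Finset.range (n+1),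
              firstVisit μ x₀ (k+1) x * killedKerN μ Set.univ (n-k) x₀ x₀ := by
            refine Finset.sum_congr rfl fun k _ => ?_
            rw [firstVisit_succ_ne x₀ x hx, ← ENNReal.tsum_mul_right]
            exact tsum_congr fun z => (mul_assoc _ _ _).symm
        _ = ∑ k ∈ Finset.range (n+2),
              firstVisit μ x₀ k x * killedKerN μ Set.univ (n+1-k) x₀ x₀ := by
            rw [Finset.sum_range_succ' (fun k =>
              firstVisit μ x₀ k x * killedKerN μ Set.univ (n+1-k) x₀ x₀) (n+1)]
            rw [firstVisit_zero_ne x₀ x hx, zero_mul, add_zero]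
            exact Finset.sum_congr rfl fun k _ => by rw [Nat.succ_sub_succ]

lemma firstVisit_optional (Ue : V → ℝ≥0∞)
    (hSH : ∀ x, ∑' z, transKer μ x z * Ue z ≤ Ue x) (x₀ : V) :
    ∀ n x, (∑ k ∈ Finset.range n, firstVisit μ x₀ k x) * Ue x₀ ≤ Ue x := by
  intro n
  induction n with
  | zero => intro x; simp
  | succ n ih =>
    intro x
    by_cases hx : x = x₀
    · subst hx
      rw [Finset.sum_eq_single 0 (fun k _ hk => by
        obtain ⟨j, rfl⟩ := Nat.exists_eq_succ_of_ne_zero hk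
        exact firstVisit_self_succ _ j) (by simp), firstVisit_self_zero, one_mul]
    · rw [Finset.sum_range_succ' (fun k => firstVisit μ x₀ k x) n,
        firstVisit_zero_ne x₀ x hx, add_zero]
      calc (∑ k ∈ Finset.range n, firstVisit μ x₀ (k+1) x) * Ue x₀
          = (∑ k ∈ Finset.range n, ∑' z, transKer μ x z * firstVisit μ x₀ k z) * Ue x₀ := by
            rw [Finset.sum_congr rfl fun k _ => firstVisit_succ_ne x₀ x hx k]
        _ = (∑' z, transKer μ x z * ∑ k ∈ Finset.range n, firstVisit μ x₀ k z) * Ue x₀ := by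
            rw [← Summable.tsum_finsetSum fun _ _ => ENNReal.summable]
            congr 1
            exact tsum_congr fun z => (Finset.mul_sum _ _ _).symm
        _ = ∑' z, transKer μ x z * ((∑ k ∈ Finset.range n, firstVisit μ x₀ k z) * Ue x₀) := by
            rw [← ENNReal.tsum_mul_right]
            exact tsum_congr fun z => (mul_assoc _ _ _)
        _ ≤ ∑' z, transKer μ x z * Ue z :=
            ENNReal.tsum_le_tsum fun z => mul_le_mul_right (ih z) _
        _ ≤ Ue x := hSH x

end FV

section Factor
variable {V : Type*} {μ : V → V → ℝ≥0∞}

lemma green_tsum (hpos : ∀ x, 0 < vertexWeight μ x) (x y : V) :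
    green μ x y = (∑' n, killedKerN μ Set.univ n x y) * (vertexWeight μ y)⁻¹ := by
  rw [green, greenKilled, ← ENNReal.tsum_mul_right]
  exact tsum_congr fun n => div_eq_mul_inv _ _

lemma green_factor (hpos : ∀ x, 0 < vertexWeight μ x) (x₀ z : V) :
    green μ z x₀ = (∑' k, firstVisit μ x₀ k z) * green μ x₀ x₀ := by
  rw [green_tsum hpos, green_tsum hpos]
  have : ∑' n, killedKerN μ Set.univ n z x₀
      = (∑' k, firstVisit μ x₀ k z) * ∑' m, killedKerN μ Set.univ m x₀ x₀ := by
    rw [← ennreal_cauchy]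
    exact tsum_congr fun n => firstVisit_decomp x₀ n z
  rw [this, mul_assoc]

lemma green_le_superharmonic (hpos : ∀ x, 0 < vertexWeight μ x)
    (Ue : V → ℝ≥0∞) (hSH : ∀ x, ∑' z, transKer μ x z * Ue z ≤ Ue x) (x₀ z : V) :
    green μ z x₀ * Ue x₀ ≤ Ue z * green μ x₀ x₀ := by
  have hF : (∑' k, firstVisit μ x₀ k z) * Ue x₀ ≤ Ue z := by
    rw [← ENNReal.tsum_mul_right]
    refine tsum_le_of_partial fun l => ?_
    rw [← Finset.sum_mul]
    exact firstVisit_optional Ue hSH x₀ l z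
  calc green μ z x₀ * Ue x₀
      = ((∑' k, firstVisit μ x₀ k z) * Ue x₀) * green μ x₀ x₀ := by
        rw [green_factor hpos]; ring
    _ ≤ Ue z * green μ x₀ x₀ := mul_le_mul_left hF _

end Factor

/-- if `h ≥ 0` is nonharmonic with `−Δh ≥ 0` and
`Δ(|Δh|^{p−2}Δh) ≥ 0` on a transient connected graph, then `h₁ = −Δh` is strictly
positive, `h(x₀) ≥ ∑_y g(x₀,y) h₁(y) μ(y)` for every `x₀`, and `g_q(x₀,x₀) < ∞`
where `q = p/(p−1)`. -/
theorem nonharmonic_supersolution_greenQ_finite {V : Type*}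
    (μ : V → V → ℝ≥0∞)
    (hsym : ∀ x y, μ x y = μ y x)
    (hloc : LocallyFinite' μ)
    (hpos : ∀ x, 0 < vertexWeight μ x)
    (hfin : ∀ x, vertexWeight μ x < ⊤)
    (hconn : ∀ x y : V, ∃ n, 0 < killedKerN μ Set.univ n x y)
    (htrans : ∀ x y, green μ x y < ⊤)
    (p q : ℝ) (hp : 1 < p) (hq : q = p / (p - 1))
    (h : V → ℝ) (hh : ∀ x, 0 ≤ h x)
    (hsuper : ∀ x, graphLap μ h x ≤ 0)
    (hnonharm : ∃ x, graphLap μ h x ≠ 0)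
    (hsys : ∀ x, 0 ≤ graphLap μ (fun y => |graphLap μ h y| ^ (p - 2) * graphLap μ h y) x) :
    (∀ x, 0 < -graphLap μ h x) ∧
    (∀ x₀ : V,
      ∑' y, green μ x₀ y * ENNReal.ofReal (-graphLap μ h y) * vertexWeight μ y ≤
        ENNReal.ofReal (h x₀)) ∧
    (∀ x₀ : V, greenQ μ q x₀ x₀ < ⊤) := by
  have hp1 : (0:ℝ) < p - 1 := by linarith
  set h₁ : V → ℝ := fun x => -graphLap μ h x with hh₁def
  have hh₁ : ∀ x, 0 ≤ h₁ x := fun x => neg_nonneg.2 (hsuper x)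
  set u : V → ℝ := fun x => h₁ x ^ (p - 1) with hudef
  have hu0 : ∀ x, 0 ≤ u x := fun x => Real.rpow_nonneg (hh₁ x) _
  -- identify the p-Laplacian expression with -u
  have hkey : (fun y => |graphLap μ h y| ^ (p - 2) * graphLap μ h y) = fun y => -(u y) := by
    funext y
    rcases eq_or_lt_of_le (hsuper y) with hy | hy
    · rw [hy, mul_zero]
      simp [hudef, hh₁def, hy, Real.zero_rpow hp1.ne']
    · have hpos' : 0 < h₁ y := by simp only [hh₁def]; linarith
      have habs : |graphLap μ h y| = h₁ y := by
        rw [abs_of_neg hy]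
      rw [habs]
      have : graphLap μ h y = -(h₁ y) := by simp [hh₁def]
      rw [this, mul_neg, ← Real.rpow_add_one hpos'.ne']
      have h21 : p - 2 + 1 = p - 1 := by ring
      rw [h21]
  -- u is superharmonic
  have hsysu : ∀ x, graphLap μ u x ≤ 0 := by
    intro x
    have h0 := hsys x
    rw [hkey] at h0
    have hneg : graphLap μ (fun y => -(u y)) x = -graphLap μ u x := by
      rw [graphLap, graphLap, ← tsum_neg]
      exact tsum_congr fun z => by ring
    rw [hneg] at h0
    linarith
  set Ue : V → ℝ≥0∞ := fun x => ENNReal.ofReal (u x) with hUedef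
  have hSH : ∀ x, ∑' z, transKer μ x z * Ue z ≤ Ue x :=
    fun x => super_ofReal hloc hpos hfin u hu0 x (hsysu x)
  obtain ⟨x₁, hx₁⟩ := hnonharm
  have hx₁pos : 0 < h₁ x₁ := by
    have hlt : graphLap μ h x₁ < 0 := lt_of_le_of_ne (hsuper x₁) hx₁
    simp only [hh₁def]
    linarith
  have hUx₁ : Ue x₁ ≠ 0 := by
    simp only [hUedef, hudef]
    rw [Ne, ENNReal.ofReal_eq_zero, not_le]
    exact Real.rpow_pos_of_pos hx₁pos _
  have hUpos : ∀ x, Ue x ≠ 0 := pos_of_superharmonic hconn Ue hSH x₁ hUx₁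
  -- Part 1
  have part1 : ∀ x, 0 < h₁ x := by
    intro x
    rcases eq_or_lt_of_le (hh₁ x) with hx | hx
    · exfalso
      apply hUpos x
      simp only [hUedef, hudef, ← hx, Real.zero_rpow hp1.ne', ENNReal.ofReal_zero]
    · exact hx
  -- Part 2
  have part2 : ∀ x₀ : V,
      ∑' y, green μ x₀ y * ENNReal.ofReal (h₁ y) * vertexWeight μ y ≤
        ENNReal.ofReal (h x₀) := by
    intro x₀
    exact green_bound hpos hfin (fun y => ENNReal.ofReal (h y))
      (fun y => ENNReal.ofReal (h₁ y))
      (fun y => ofReal_decomp hloc hpos hfin h hh y (hsuper y)) x₀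
  refine ⟨part1, part2, ?_⟩
  -- Part 3
  intro x₀
  have hpq : (p - 1) * (q - 1) = 1 := by
    rw [hq]; field_simp; ring
  have hq1 : (0:ℝ) < q - 1 := by nlinarith
  set C : ℝ≥0∞ := green μ x₀ x₀ / Ue x₀ with hCdef
  have hCtop : C ≠ ⊤ := (ENNReal.div_lt_top (htrans x₀ x₀).ne (hUpos x₀)).ne
  have hgle : ∀ z, green μ z x₀ ≤ Ue z * C := by
    intro z
    have := green_le_superharmonic hpos Ue hSH x₀ z
    rw [hCdef, ← mul_div_assoc]
    rw [ENNReal.le_div_iff_mul_le (Or.inl (hUpos x₀)) (Or.inl ENNReal.ofReal_ne_top)]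
    exact this
  have hUeq : ∀ z, Ue z ^ (q - 1) = ENNReal.ofReal (h₁ z) := by
    intro z
    have : Ue z = ENNReal.ofReal (h₁ z) ^ (p - 1) := by
      show ENNReal.ofReal (h₁ z ^ (p - 1)) = ENNReal.ofReal (h₁ z) ^ (p - 1)
      exact (ENNReal.ofReal_rpow_of_pos (part1 z)).symm
    rw [this, ← ENNReal.rpow_mul, hpq, ENNReal.rpow_one]
  have hbound : ∀ z, green μ x₀ z * green μ z x₀ ^ (q - 1) * vertexWeight μ z
      ≤ green μ x₀ z * ENNReal.ofReal (h₁ z) * vertexWeight μ z * C ^ (q - 1) := by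
    intro z
    have h1 : green μ z x₀ ^ (q - 1) ≤ ENNReal.ofReal (h₁ z) * C ^ (q - 1) := by
      calc green μ z x₀ ^ (q - 1) ≤ (Ue z * C) ^ (q - 1) :=
            ENNReal.rpow_le_rpow (hgle z) hq1.le
        _ = Ue z ^ (q - 1) * C ^ (q - 1) := ENNReal.mul_rpow_of_nonneg _ _ hq1.le
        _ = ENNReal.ofReal (h₁ z) * C ^ (q - 1) := by rw [hUeq z]
    calc green μ x₀ z * green μ z x₀ ^ (q - 1) * vertexWeight μ z
        ≤ green μ x₀ z * (ENNReal.ofReal (h₁ z) * C ^ (q - 1)) * vertexWeight μ z := by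
          exact mul_le_mul_left (mul_le_mul_right h1 _) _
      _ = green μ x₀ z * ENNReal.ofReal (h₁ z) * vertexWeight μ z * C ^ (q - 1) := by ring
  rw [greenQ]
  calc ∑' z, green μ x₀ z * green μ z x₀ ^ (q - 1) * vertexWeight μ z
      ≤ ∑' z, green μ x₀ z * ENNReal.ofReal (h₁ z) * vertexWeight μ z * C ^ (q - 1) :=
        ENNReal.tsum_le_tsum hbound
    _ = (∑' z, green μ x₀ z * ENNReal.ofReal (h₁ z) * vertexWeight μ z) * C ^ (q - 1) :=
        ENNReal.tsum_mul_right
    _ ≤ ENNReal.ofReal (h x₀) * C ^ (q - 1) := mul_le_mul_left (part2 x₀) _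
    _ < ⊤ := ENNReal.mul_lt_top ENNReal.ofReal_lt_top
        (ENNReal.rpow_lt_top_of_nonneg hq1.le hCtop)
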